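/- Let n, k ∈ ℕ and let X be an n-dimensional Alexandrov space of curvature ≥ 0. Let F : X → ℝᵏ be a 1-Lipschitz affine map with coordinate functions F₁, …, F_k, and suppose there exist a point x ∈ X and isometric embeddings γ₁, …, γ_k : ℝ → X (lines) with γᵢ(0) = x and Fᵢ(γᵢ(t)) = Fᵢ(x) + t for all t ∈ ℝ and all i. Then there exist a metric space Z and a surjective isometry Φ : X → Z ×₂ ℝᵏ such that, writing Φ(y) = (z(y), v(y)), one has F(y) = v(y) for all y ∈ X. -/

import Mathlib

open Metric MeasureTheory Set

noncomputable section

/-- The comparison angle `∠̃_κ(q; x, y)`: the angle at the vertex corresponding to `q` of a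
geodesic triangle in the simply connected model surface of constant curvature `κ` whose side
lengths are `d(q,x)`, `d(q,y)`, `d(x,y)`, computed by the law of cosines in each model. -/
def cmpAngle (κ : ℝ) {X : Type*} [MetricSpace X] (q x y : X) : ℝ :=
  if κ = 0 then
    Real.arccos ((dist q x ^ 2 + dist q y ^ 2 - dist x y ^ 2) / (2 * dist q x * dist q y))
  else if 0 < κ then
    Real.arccos ((Real.cos (Real.sqrt κ * dist x y) -
        Real.cos (Real.sqrt κ * dist q x) * Real.cos (Real.sqrt κ * dist q y)) /
      (Real.sin (Real.sqrt κ * dist q x) * Real.sin (Real.sqrt κ * dist q y)))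
  else
    Real.arccos ((Real.cosh (Real.sqrt (-κ) * dist q x) * Real.cosh (Real.sqrt (-κ) * dist q y) -
        Real.cosh (Real.sqrt (-κ) * dist x y)) /
      (Real.sinh (Real.sqrt (-κ) * dist q x) * Real.sinh (Real.sqrt (-κ) * dist q y)))

/-- A constant-speed geodesic parametrized by `[0,1]`. -/
def IsGeodesicSeg {X : Type*} [MetricSpace X] (γ : ℝ → X) : Prop :=
  ∀ s ∈ Set.Icc (0:ℝ) 1, ∀ t ∈ Set.Icc (0:ℝ) 1,
    dist (γ s) (γ t) = |s - t| * dist (γ 0) (γ 1)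

/-- A metric space is geodesic if any two points are joined by a constant-speed geodesic. -/
def GeodesicSpace (X : Type*) [MetricSpace X] : Prop :=
  ∀ x y : X, ∃ γ : ℝ → X, IsGeodesicSeg γ ∧ γ 0 = x ∧ γ 1 = y

/-- `X` has curvature `≥ κ`: the quadruple comparison condition. -/
def CurvGE (κ : ℝ) (X : Type*) [MetricSpace X] : Prop :=
  ∀ q x y z : X, q ≠ x → q ≠ y → q ≠ z → x ≠ y → x ≠ z → y ≠ z →
    cmpAngle κ q x y + cmpAngle κ q y z + cmpAngle κ q z x ≤ 2 * Real.pi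

/-- An `n`-dimensional Alexandrov space of curvature `≥ κ`: a complete, proper, geodesic
metric space of Hausdorff dimension `n` that has curvature `≥ κ`. -/
def IsAlexandrov (n : ℕ) (κ : ℝ) (X : Type*) [MetricSpace X] : Prop :=
  CompleteSpace X ∧ ProperSpace X ∧ GeodesicSpace X ∧
    dimH (Set.univ : Set X) = n ∧ CurvGE κ X

/-- A map into a real vector space is affine if it is affine along every constant-speed
geodesic. -/
def AffineOn {X : Type*} [MetricSpace X] {V : Type*} [AddCommGroup V] [Module ℝ V]
    (F : X → V) : Prop :=
  ∀ γ : ℝ → X, IsGeodesicSeg γ → ∀ t ∈ Set.Icc (0:ℝ) 1,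
    F (γ t) = (1 - t) • F (γ 0) + t • F (γ 1)

/-- A real-valued function is Lipschitz. -/
def IsLip {X : Type*} [MetricSpace X] (f : X → ℝ) : Prop :=
  ∃ L : ℝ, 0 ≤ L ∧ ∀ x y, |f x - f y| ≤ L * dist x y

/-- The optimal Lipschitz constant of a real-valued function. -/
def lipConst {X : Type*} [MetricSpace X] (f : X → ℝ) : ℝ :=
  sInf {L : ℝ | 0 ≤ L ∧ ∀ x y, |f x - f y| ≤ L * dist x y}

namespace MLSaux

variable {X : Type*} [MetricSpace X]

lemma cmpAngle_zero (q a b : X) :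
    cmpAngle 0 q a b =
      Real.arccos ((dist q a ^ 2 + dist q b ^ 2 - dist a b ^ 2) / (2 * dist q a * dist q b)) := by
  simp [cmpAngle]

/-- Bounds making the comparison-cosine a genuine cosine. -/
lemma cos_expr_bounds (p q r : X) (hpq : 0 < dist p q) (hpr : 0 < dist p r) :
    -1 ≤ (dist p q ^ 2 + dist p r ^ 2 - dist q r ^ 2) / (2 * dist p q * dist p r) ∧
      (dist p q ^ 2 + dist p r ^ 2 - dist q r ^ 2) / (2 * dist p q * dist p r) ≤ 1 := by
  have hden : (0:ℝ) < 2 * dist p q * dist p r := by positivity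
  constructor
  · rw [le_div_iff₀ hden]
    have h1 : dist q r ≤ dist q p + dist p r := dist_triangle q p r
    have h2 : dist q r ^ 2 ≤ (dist q p + dist p r) ^ 2 := by
      nlinarith [dist_nonneg (x := q) (y := r)]
    rw [dist_comm q p] at h2
    nlinarith
  · rw [div_le_iff₀ hden]
    have h1 : |dist q p - dist r p| ≤ dist q r := abs_dist_sub_le q r p
    have h2 : (dist q p - dist r p) ^ 2 ≤ dist q r ^ 2 := by
      nlinarith [abs_nonneg (dist q p - dist r p), sq_abs (dist q p - dist r p)]
    rw [dist_comm q p, dist_comm r p] at h2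
    nlinarith

/-- The quadruple condition yields concavity of the squared distance along isometric lines. -/
lemma concav (hcurv : CurvGE 0 X) (lam : ℝ → X) (hiso : ∀ s t, dist (lam s) (lam t) = |s - t|)
    (z : X) (t₀ r r' : ℝ) (hr : 0 < r) (hr' : 0 < r') :
    r' * dist z (lam (t₀ - r)) ^ 2 + r * dist z (lam (t₀ + r')) ^ 2
      ≤ (r + r') * dist z (lam t₀) ^ 2 + r * r' * (r + r') := by
  have hqa : dist (lam t₀) (lam (t₀ - r)) = r := by
    rw [hiso, show t₀ - (t₀ - r) = r by ring, abs_of_pos hr]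
  have hqb : dist (lam t₀) (lam (t₀ + r')) = r' := by
    rw [hiso, show t₀ - (t₀ + r') = -r' by ring, abs_neg, abs_of_pos hr']
  have hab : dist (lam (t₀ - r)) (lam (t₀ + r')) = r + r' := by
    rw [hiso, show t₀ - r - (t₀ + r') = -(r + r') by ring, abs_neg, abs_of_pos (by linarith)]
  have haq : dist (lam (t₀ - r)) (lam t₀) = r := by rw [dist_comm]; exact hqa
  have hbq : dist (lam (t₀ + r')) (lam t₀) = r' := by rw [dist_comm]; exact hqb
  have hba : dist (lam (t₀ + r')) (lam (t₀ - r)) = r + r' := by rw [dist_comm]; exact hab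
  by_cases h1 : z = lam t₀
  · rw [h1, hqa, hqb, dist_self]
    exact le_of_eq (by ring)
  by_cases h2 : z = lam (t₀ - r)
  · rw [h2, dist_self, haq, hab]
    exact le_of_eq (by ring)
  by_cases h3 : z = lam (t₀ + r')
  · rw [h3, hba, dist_self, hbq]
    exact le_of_eq (by ring)
  set q := lam t₀ with hq
  set a := lam (t₀ - r) with ha
  set b := lam (t₀ + r') with hb
  have hdz : 0 < dist q z := by rw [dist_comm, dist_pos]; exact h1
  have hne_ab : a ≠ b := by
    intro h; rw [h, dist_self] at hab; linarith
  have hne_qa : q ≠ a := by intro h; rw [h, dist_self] at hqa; linarith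
  have hne_qb : q ≠ b := by intro h; rw [h, dist_self] at hqb; linarith
  have quad := hcurv q a z b hne_qa (fun h => h1 h.symm) hne_qb
    (fun h => h2 h.symm) hne_ab h3
  have hthird : cmpAngle 0 q b a = Real.pi := by
    rw [cmpAngle_zero, hqb, hqa, hba]
    rw [show (r' ^ 2 + r ^ 2 - (r + r') ^ 2) / (2 * r' * r) = -1 by field_simp; ring]
    exact Real.arccos_neg_one
  rw [hthird] at quad
  have hdqa : 0 < dist q a := by rw [hqa]; exact hr
  have hdqb : 0 < dist q b := by rw [hqb]; exact hr'
  set c₁ := (dist q a ^ 2 + dist q z ^ 2 - dist a z ^ 2) / (2 * dist q a * dist q z) with hc₁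
  set c₂ := (dist q z ^ 2 + dist q b ^ 2 - dist z b ^ 2) / (2 * dist q z * dist q b) with hc₂
  have hA1 : cmpAngle 0 q a z = Real.arccos c₁ := cmpAngle_zero q a z
  have hA2 : cmpAngle 0 q z b = Real.arccos c₂ := cmpAngle_zero q z b
  rw [hA1, hA2] at quad
  have hb1' : -1 ≤ c₁ ∧ c₁ ≤ 1 := cos_expr_bounds q a z hdqa hdz
  have hb2' : -1 ≤ c₂ ∧ c₂ ≤ 1 := cos_expr_bounds q z b hdz hdqb
  have key : -c₂ ≤ c₁ := by
    have h1' : Real.arccos c₁ ≤ Real.pi - Real.arccos c₂ := by linarith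
    have hmono := Real.cos_le_cos_of_nonneg_of_le_pi (Real.arccos_nonneg c₁)
      (by linarith [Real.arccos_nonneg c₂]) h1'
    rw [Real.cos_arccos hb1'.1 hb1'.2, Real.cos_pi_sub, Real.cos_arccos hb2'.1 hb2'.2] at hmono
    linarith
  have hden1 : (0:ℝ) < 2 * dist q a * dist q z := by positivity
  have hden2 : (0:ℝ) < 2 * dist q z * dist q b := by positivity
  have key2 : -(dist q z ^ 2 + dist q b ^ 2 - dist z b ^ 2) / (2 * dist q z * dist q b)
      ≤ (dist q a ^ 2 + dist q z ^ 2 - dist a z ^ 2) / (2 * dist q a * dist q z) := by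
    rw [neg_div]; exact key
  rw [div_le_div_iff₀ hden2 hden1] at key2
  rw [hqa, hqb] at key2
  rw [dist_comm a z, dist_comm q z] at key2
  rw [dist_comm q z] at hdz
  nlinarith [key2, hdz, mul_pos hdz hdz, sq_nonneg (dist z q)]

/-- A "concave" function (in 3-point form) which is bounded below on `ℝ` is constant. -/
lemma const_of_concav (w : ℝ → ℝ) (M : ℝ)
    (hconc : ∀ s t u : ℝ, s < t → t < u → (u - t) * w s + (t - s) * w u ≤ (u - s) * w t)
    (hbd : ∀ t, -M ≤ w t) : ∀ t, w t = w 0 := by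
  have step1 : ∀ a b : ℝ, a < b → w a ≤ w b := by
    intro a b hab
    by_contra hlt
    push_neg at hlt
    set ε := w a - w b with hε
    have hεpos : 0 < ε := by linarith
    have key : ∀ u : ℝ, b < u → (u - a) * ε ≤ (b - a) * (w a + M) := by
      intro u hu
      have h := hconc a b u hab hu
      have hM := hbd u
      nlinarith
    have hwaM : 0 ≤ w a + M := by linarith [hbd a]
    set u := max (b + 1) (a + ((b - a) * (w a + M) + 1) / ε) with hu
    have hu1 : b < u := lt_of_lt_of_le (by linarith) (le_max_left _ _)
    have hu2 : a + ((b - a) * (w a + M) + 1) / ε ≤ u := le_max_right _ _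
    have := key u hu1
    have h3 : ((b - a) * (w a + M) + 1) / ε ≤ u - a := by linarith
    rw [div_le_iff₀ hεpos] at h3
    nlinarith
  have step2 : ∀ a b : ℝ, a < b → w b ≤ w a := by
    intro a b hab
    by_contra hlt
    push_neg at hlt
    set ε := w b - w a with hε
    have hεpos : 0 < ε := by linarith
    have key : ∀ u : ℝ, u < a → (b - u) * ε ≤ (b - a) * (w b + M) := by
      intro u hu
      have h := hconc u a b hu hab
      have hM := hbd u
      nlinarith
    have hwbM : 0 ≤ w b + M := by linarith [hbd b]
    set u := min (a - 1) (b - ((b - a) * (w b + M) + 1) / ε) with hu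
    have hu1 : u < a := lt_of_le_of_lt (min_le_left _ _) (by linarith)
    have hu2 : u ≤ b - ((b - a) * (w b + M) + 1) / ε := min_le_right _ _
    have := key u hu1
    have h3 : ((b - a) * (w b + M) + 1) / ε ≤ b - u := by linarith
    rw [div_le_iff₀ hεpos] at h3
    nlinarith
  intro t
  rcases lt_trichotomy t 0 with h | h | h
  · exact le_antisymm (step1 t 0 h) (step2 t 0 h)
  · rw [h]
  · exact le_antisymm (step2 0 t h) (step1 0 t h)

/-- **Key identity**: if `λ` is an isometric line along which the 1-Lipschitz function `g`
has slope exactly 1, then for curvature ≥ 0 the distance to points of the line is given by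
the Euclidean product formula. -/
lemma identityI (hcurv : CurvGE 0 X) (g : X → ℝ) (hg : ∀ a b, |g a - g b| ≤ dist a b)
    (lam : ℝ → X) (hiso : ∀ s t, dist (lam s) (lam t) = |s - t|)
    (hsl : ∀ s, g (lam s) = g (lam 0) + s) (z : X) (t : ℝ) :
    dist z (lam t) ^ 2 = dist z (lam 0) ^ 2 - 2 * (g z - g (lam 0)) * t + t ^ 2 := by
  set c := g z - g (lam 0) with hc
  set v : ℝ → ℝ := fun t => dist z (lam t) ^ 2 - t ^ 2 with hv
  set w : ℝ → ℝ := fun t => v t - (v 0 - 2 * c * t) with hw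
  have hconc : ∀ s t u : ℝ, s < t → t < u → (u - t) * w s + (t - s) * w u ≤ (u - s) * w t := by
    intro s t u hst htu
    have h := concav hcurv lam hiso z t (t - s) (u - t) (by linarith) (by linarith)
    rw [show t - (t - s) = s by ring, show t + (u - t) = u by ring] at h
    simp only [hw, hv]
    nlinarith [h]
  have hbd : ∀ s, -(v 0 - c ^ 2) ≤ w s := by
    intro s
    have h1 : |g z - g (lam s)| ≤ dist z (lam s) := hg z (lam s)
    rw [hsl s] at h1
    have h2 : (c - s) ^ 2 ≤ dist z (lam s) ^ 2 := by
      have : |c - s| ≤ dist z (lam s) := by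
        convert h1 using 2; rw [hc]; ring
      nlinarith [abs_nonneg (c - s), sq_abs (c - s)]
    simp only [hw, hv]
    nlinarith
  have hconst := const_of_concav w (v 0 - c ^ 2) hconc hbd t
  have hw0 : w 0 = 0 := by simp [hw]
  rw [hw0] at hconst
  have : v t = v 0 - 2 * c * t := by
    have := hconst
    simp only [hw] at this
    linarith
  simp only [hv] at this
  have hd0 : dist z (lam 0) ^ 2 = v 0 := by simp [hv]
  nlinarith [this]


lemma arccos_anti {x y : ℝ} (h : x ≤ y) : Real.arccos y ≤ Real.arccos x := by
  unfold Real.arccos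
  have := Real.monotone_arcsin h
  linarith

/-- Quadruple comparison closeness lemma. -/
lemma quad_close (hcurv : CurvGE 0 X) (z p p' q : X) (t s : ℝ) (ht : 0 < t)
    (hp : dist z p = t) (hp' : dist z p' = t) (hq : 0 < dist z q)
    (h2 : t ^ 2 + dist z q ^ 2 - dist p q ^ 2 ≤ 2 * t * dist z q * (-1 + s))
    (h3 : t ^ 2 + dist z q ^ 2 - dist p' q ^ 2 ≤ 2 * t * dist z q * (-1 + s)) :
    dist p p' ^ 2 ≤ 8 * t ^ 2 * s := by
  set A := dist z q with hA
  have hs0 : 0 ≤ s := by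
    have htr : dist p q ≤ t + A := by
      have h4 := dist_triangle p z q; rw [dist_comm p z, hp] at h4; linarith
    have htr2 : dist p q ^ 2 ≤ (t + A) ^ 2 :=
      pow_le_pow_left₀ dist_nonneg htr 2
    have h5 : 0 ≤ 2 * t * A * s := by nlinarith only [h2, htr2]
    by_contra hneg
    push_neg at hneg
    have h6 : 2 * t * A * s < 0 :=
      mul_neg_of_pos_of_neg (by positivity) hneg
    linarith only [h5, h6]
  by_cases hs1 : 1 < s
  · have hd : dist p p' ≤ 2 * t := by
      have h4 := dist_triangle p z p'; rw [dist_comm p z, hp, hp'] at h4; linarith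
    nlinarith only [hd, dist_nonneg (x := p) (y := p'), hs1,
      mul_nonneg (sq_nonneg t) (by linarith : (0:ℝ) ≤ 2 * s - 1), ht]
  push_neg at hs1
  by_cases hpp' : p = p'
  · rw [hpp', dist_self]
    have : (0:ℝ) ≤ 8 * t ^ 2 * s := by positivity
    nlinarith only [this]
  have hzp : z ≠ p := by rw [← dist_pos, hp]; exact ht
  have hzp' : z ≠ p' := by rw [← dist_pos, hp']; exact ht
  have hzq : z ≠ q := by rw [← dist_pos]; exact hq
  have h2tA : 0 < 2 * t * A := by positivity
  have hRHSle : 2 * t * A * (-1 + s) ≤ 0 :=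
    mul_nonpos_of_nonneg_of_nonpos h2tA.le (by linarith)
  have hpq : p ≠ q := by
    intro h; rw [h, dist_self] at h2
    nlinarith only [h2, hRHSle, pow_pos ht 2, sq_nonneg A]
  have hp'q : p' ≠ q := by
    intro h; rw [h, dist_self] at h3
    nlinarith only [h3, hRHSle, pow_pos ht 2, sq_nonneg A]
  have quad := hcurv z p p' q hzp hzp' hzq hpp' hpq hp'q
  set d := dist p p' with hd
  set m₁ := (t ^ 2 + t ^ 2 - d ^ 2) / (2 * t * t) with hm₁
  set m₂ := (t ^ 2 + A ^ 2 - dist p' q ^ 2) / (2 * t * A) with hm₂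
  set m₃ := (A ^ 2 + t ^ 2 - dist q p ^ 2) / (2 * A * t) with hm₃
  have e₁ : cmpAngle 0 z p p' = Real.arccos m₁ := by rw [cmpAngle_zero, hp, hp']
  have e₂ : cmpAngle 0 z p' q = Real.arccos m₂ := by rw [cmpAngle_zero, hp']
  have e₃ : cmpAngle 0 z q p = Real.arccos m₃ := by rw [cmpAngle_zero, hp]
  rw [e₁, e₂, e₃] at quad
  have hb₁ : -1 ≤ m₁ ∧ m₁ ≤ 1 := by
    have hb := cos_expr_bounds z p p' (by rw [hp]; exact ht) (by rw [hp']; exact ht)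
    rw [hp, hp'] at hb; exact hb
  have hm₂le : m₂ ≤ -1 + s := by
    rw [hm₂, div_le_iff₀ (by positivity)]
    calc t ^ 2 + A ^ 2 - dist p' q ^ 2 ≤ 2 * t * A * (-1 + s) := h3
    _ = (-1 + s) * (2 * t * A) := by ring
  have hm₃le : m₃ ≤ -1 + s := by
    rw [hm₃, div_le_iff₀ (by positivity), dist_comm q p]
    calc A ^ 2 + t ^ 2 - dist p q ^ 2 ≤ 2 * t * A * (-1 + s) := by linarith only [h2]
    _ = (-1 + s) * (2 * A * t) := by ring
  have harc₂ : Real.arccos (-1 + s) ≤ Real.arccos m₂ := arccos_anti hm₂le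
  have harc₃ : Real.arccos (-1 + s) ≤ Real.arccos m₃ := arccos_anti hm₃le
  have hneg : Real.arccos (-1 + s) = Real.pi - Real.arccos (1 - s) := by
    rw [show (-1 + s : ℝ) = -(1 - s) by ring, Real.arccos_neg]
  set β := Real.arccos (1 - s) with hβ
  have hβ2 : β ≤ Real.pi / 2 := Real.arccos_le_pi_div_two.2 (by linarith)
  have hβ0 : 0 ≤ β := Real.arccos_nonneg _
  have hquad2 : Real.arccos m₁ ≤ 2 * β := by
    rw [hneg] at harc₂ harc₃; linarith
  have hcos : Real.cos (2 * β) ≤ Real.cos (Real.arccos m₁) :=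
    Real.cos_le_cos_of_nonneg_of_le_pi (Real.arccos_nonneg m₁) (by linarith) hquad2
  rw [Real.cos_arccos hb₁.1 hb₁.2, Real.cos_two_mul, hβ,
    Real.cos_arccos (by linarith) (by linarith)] at hcos
  rw [hm₁, le_div_iff₀ (by positivity)] at hcos
  nlinarith only [hcos, mul_nonneg (sq_nonneg t) (sq_nonneg s)]

set_option maxHeartbeats 2000000 in
/-- Existence of a ray from any point `z`, asymptotic to the line `γ`, with slope exactly 1
for the 1-Lipschitz affine function `g`. -/
lemma ray (hcurv : CurvGE 0 X) (hgeo : GeodesicSpace X) [CompleteSpace X]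
    (g : X → ℝ) (hg : ∀ a b : X, |g a - g b| ≤ dist a b)
    (haffg : ∀ σ : ℝ → X, IsGeodesicSeg σ → ∀ u ∈ Set.Icc (0:ℝ) 1,
      g (σ u) = (1 - u) * g (σ 0) + u * g (σ 1))
    (γ : ℝ → X) (hiso : ∀ s t : ℝ, dist (γ s) (γ t) = |s - t|)
    (hsl : ∀ s : ℝ, g (γ s) = g (γ 0) + s) (z : X) :
    ∃ ρ : ℝ → X, ρ 0 = z ∧ (∀ s, 0 ≤ s → ∀ t, 0 ≤ t → dist (ρ s) (ρ t) = |s - t|) ∧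
      (∀ t, 0 ≤ t → g (ρ t) = g z + t) := by
  classical
  obtain ⟨σ, hσ⟩ : ∃ σ : ℕ → ℝ → X, ∀ n, IsGeodesicSeg (σ n) ∧ σ n 0 = z ∧ σ n 1 = γ n := by
    have := fun n : ℕ => hgeo z (γ n)
    choose σ h1 h2 h3 using this
    exact ⟨σ, fun n => ⟨h1 n, h2 n, h3 n⟩⟩
  set x := γ 0 with hx
  set u0 := dist z x with hu0
  set c := g z - g x with hc
  have hcu0 : |c| ≤ u0 := hg z x
  have hu0n : 0 ≤ u0 := dist_nonneg
  have hId : ∀ (p : X) (s : ℝ), dist p (γ s) ^ 2 = dist p x ^ 2 - 2 * (g p - g x) * s + s ^ 2 :=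
    fun p s => identityI hcurv g hg γ hiso hsl p s
  set L : ℕ → ℝ := fun n => dist z (γ n) with hL
  have hL2 : ∀ n : ℕ, L n ^ 2 = u0 ^ 2 - 2 * c * n + (n:ℝ) ^ 2 := fun n => hId z n
  have hLlb : ∀ n : ℕ, (n:ℝ) - c ≤ L n := by
    intro n
    have h1 := hg z (γ n)
    rw [hsl n] at h1
    have : |c - n| ≤ L n := by
      convert h1 using 2
      rw [hc, hx]; ring
    calc (n:ℝ) - c ≤ |c - n| := by rw [abs_sub_comm]; exact le_abs_self _
    _ ≤ L n := this
  have hLub : ∀ n : ℕ, L n ≤ u0 + n := by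
    intro n
    calc L n ≤ dist z x + dist x (γ n) := dist_triangle z x (γ n)
    _ = u0 + n := by
        rw [hx, hiso, show (0:ℝ) - n = -(n:ℝ) by ring, abs_neg, abs_of_nonneg (Nat.cast_nonneg n)]
  set w : ℕ → ℝ → X := fun n t => σ n (t / L n) with hw
  -- basic facts for large n
  have hfacts : ∀ t : ℝ, 0 ≤ t → ∀ n : ℕ, c + t + u0 + 1 ≤ (n:ℝ) →
      0 < L n ∧ t / L n ∈ Set.Icc (0:ℝ) 1 ∧ dist z (w n t) = t ∧
        g (w n t) = g z + t * ((n:ℝ) - c) / L n := by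
    intro t ht n hn
    have hβpos : 0 < (n:ℝ) - c := by linarith
    have hLpos : 0 < L n := lt_of_lt_of_le (by linarith) (hLlb n)
    have htL : t ≤ L n := le_trans (by linarith) (hLlb n)
    have hmem : t / L n ∈ Set.Icc (0:ℝ) 1 := by
      constructor
      · exact div_nonneg ht hLpos.le
      · rw [div_le_one hLpos]; exact htL
    have habs : |0 - t / L n| = t / L n := by
      rw [zero_sub, abs_neg]; exact abs_of_nonneg hmem.1
    have hdzw : dist z (w n t) = t := by
      have hseg := (hσ n).1 0 ⟨le_refl 0, by norm_num⟩ (t / L n) hmem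
      rw [(hσ n).2.1, (hσ n).2.2] at hseg
      show dist z (σ n (t / L n)) = t
      rw [hseg, show dist z (γ (n:ℕ)) = L n from rfl, habs]
      field_simp
    have hgw : g (w n t) = g z + t * ((n:ℝ) - c) / L n := by
      have haf := haffg (σ n) (hσ n).1 (t / L n) hmem
      rw [(hσ n).2.1, (hσ n).2.2, hsl n] at haf
      show g (σ n (t / L n)) = g z + t * ((n:ℝ) - c) / L n
      rw [haf, hc]
      field_simp
      ring
    exact ⟨hLpos, hmem, hdzw, hgw⟩
  -- deviation of g along w from perfect slope
  set δ : ℝ → ℕ → ℝ := fun t n => t - t * ((n:ℝ) - c) / L n with hδ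
  have hδfacts : ∀ t : ℝ, 0 ≤ t → ∀ n : ℕ, c + t + u0 + 1 ≤ (n:ℝ) →
      0 ≤ δ t n ∧ δ t n ≤ t * u0 ^ 2 / ((n:ℝ) - c) ^ 2 := by
    intro t ht n hn
    obtain ⟨hLpos, _, _, _⟩ := hfacts t ht n hn
    have hβpos : 0 < (n:ℝ) - c := by linarith
    have hLβ : (n:ℝ) - c ≤ L n := hLlb n
    have h2 : L n ^ 2 = ((n:ℝ) - c) ^ 2 + (u0 ^ 2 - c ^ 2) := by
      rw [hL2 n]; ring
    have hc2 : c ^ 2 ≤ u0 ^ 2 := by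
      nlinarith only [hcu0, abs_nonneg c, sq_abs c, neg_abs_le c, le_abs_self c]
    have hfrac : t * ((n:ℝ) - c) / L n ≤ t := by
      rw [div_le_iff₀ hLpos]
      nlinarith
    constructor
    · simp only [hδ]; linarith
    · simp only [hδ]
      have e1 : t - t * ((n:ℝ) - c) / L n = t * (L n - ((n:ℝ) - c)) / L n := by
        field_simp
      rw [e1, div_le_div_iff₀ hLpos (by positivity)]
      set β := (n:ℝ) - c with hβdef
      have hA : (L n - β) * (L n + β) = u0 ^ 2 - c ^ 2 := by linear_combination h2
      have hLβ0 : 0 ≤ L n - β := by linarith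
      have hLβpos : 0 < L n + β := by linarith
      have k3 : (L n - β) * β ^ 2 * (L n + β) = (u0 ^ 2 - c ^ 2) * β ^ 2 := by
        linear_combination β ^ 2 * hA
      have s1 : (u0 ^ 2 - c ^ 2) * β ^ 2 ≤ u0 ^ 2 * β ^ 2 :=
        mul_le_mul_of_nonneg_right (by linarith only [sq_nonneg c]) (sq_nonneg β)
      have hB : β ^ 2 ≤ L n * (L n + β) := by
        nlinarith only [hLβ, hβpos.le, hLpos.le, sq_nonneg (L n)]
      have s2 : u0 ^ 2 * β ^ 2 ≤ u0 ^ 2 * (L n * (L n + β)) :=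
        mul_le_mul_of_nonneg_left hB (sq_nonneg u0)
      have k5 : (L n - β) * β ^ 2 ≤ u0 ^ 2 * L n := by
        have h6 : (L n - β) * β ^ 2 * (L n + β) ≤ u0 ^ 2 * L n * (L n + β) := by
          calc (L n - β) * β ^ 2 * (L n + β) = (u0 ^ 2 - c ^ 2) * β ^ 2 := k3
          _ ≤ u0 ^ 2 * β ^ 2 := s1
          _ ≤ u0 ^ 2 * (L n * (L n + β)) := s2
          _ = u0 ^ 2 * L n * (L n + β) := by ring
        exact le_of_mul_le_mul_right h6 hLβpos
      calc t * (L n - β) * β ^ 2 = t * ((L n - β) * β ^ 2) := by ring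
      _ ≤ t * (u0 ^ 2 * L n) := mul_le_mul_of_nonneg_left k5 ht
      _ = t * u0 ^ 2 * L n := by ring
  -- the key Cauchy estimate
  have key : ∀ t : ℝ, 0 < t → ∀ n m S : ℕ, c + t + u0 + 1 ≤ (n:ℝ) → c + t + u0 + 1 ≤ (m:ℝ) →
      |c| + 1 ≤ (S:ℝ) →
      dist (w n t) (w m t) ^ 2 ≤ 8 * t * (t + u0) ^ 2 / (S:ℝ) + 8 * t * (δ t n + δ t m) := by
    intro t ht n m S hn hm hS
    have hSpos : (0:ℝ) < S := by
      have := abs_nonneg c; linarith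
    obtain ⟨hLn, hmemn, hdn, hgn⟩ := hfacts t ht.le n hn
    obtain ⟨hLm, hmemm, hdm, hgm⟩ := hfacts t ht.le m hm
    obtain ⟨hδn0, hδnub⟩ := hδfacts t ht.le n hn
    obtain ⟨hδm0, hδmub⟩ := hδfacts t ht.le m hm
    set q : X := γ (-(S:ℝ)) with hq
    set A := dist z q with hA
    have hc2 : c ^ 2 ≤ u0 ^ 2 := by
      nlinarith only [hcu0, abs_nonneg c, sq_abs c, neg_abs_le c, le_abs_self c]
    have hA2 : A ^ 2 = u0 ^ 2 + 2 * c * S + (S:ℝ) ^ 2 := by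
      rw [hA, hq]
      rw [hId z (-(S:ℝ))]
      ring
    have hApos : 1 ≤ A := by
      have h0 : 0 ≤ A := dist_nonneg
      have h1 : 1 ≤ (S:ℝ) + c := by
        have := neg_abs_le c; linarith
      nlinarith only [h0, h1, hA2, hc2]
    have hAub : A ≤ u0 + S := by
      have h1 : dist x q = (S:ℝ) := by
        rw [hq, hx, hiso, show (0:ℝ) - -(S:ℝ) = (S:ℝ) by ring, abs_of_nonneg hSpos.le]
      calc A ≤ dist z x + dist x q := dist_triangle z x q
      _ = u0 + S := by rw [h1]
    set sn := ((t + u0) ^ 2 + 2 * (S:ℝ) * δ t n) / (2 * t * S) with hsn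
    set sm := ((t + u0) ^ 2 + 2 * (S:ℝ) * δ t m) / (2 * t * S) with hsm
    have hsn0 : 0 ≤ sn := by
      rw [hsn]
      have : (0:ℝ) ≤ (t + u0) ^ 2 + 2 * S * δ t n := by positivity
      positivity
    have hsm0 : 0 ≤ sm := by
      rw [hsm]
      have : (0:ℝ) ≤ (t + u0) ^ 2 + 2 * S * δ t m := by positivity
      positivity
    set s := sn + sm with hs
    have hfin : 8 * t ^ 2 * s = 8 * t * (t + u0) ^ 2 / (S:ℝ) + 8 * t * (δ t n + δ t m) := by
      rw [hs, hsn, hsm]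
      have ht' : t ≠ 0 := ne_of_gt ht
      have hS' : (S:ℝ) ≠ 0 := ne_of_gt hSpos
      field_simp
      ring
    rw [← hfin]
    by_cases hbig : 1 < s
    · have hd : dist (w n t) (w m t) ≤ 2 * t := by
        have h1 := dist_triangle (w n t) z (w m t)
        rw [dist_comm (w n t) z, hdn, hdm] at h1
        linarith
      nlinarith only [hd, dist_nonneg (x := w n t) (y := w m t), hbig,
        mul_nonneg (sq_nonneg t) (by linarith : (0:ℝ) ≤ 2 * s - 1)]
    push_neg at hbig
    -- the cleared cosine estimates
    have hclear : ∀ ν : ℕ, c + t + u0 + 1 ≤ (ν:ℝ) → 0 ≤ δ t ν → sn ⊔ sm ≥ 0 →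
        ((t + u0) ^ 2 + 2 * (S:ℝ) * δ t ν) / (2 * t * S) ≤ s →
        t ^ 2 + A ^ 2 - dist (w ν t) q ^ 2 ≤ 2 * t * A * (-1 + s) := by
      intro ν hν hδν0 _ hsνs
      obtain ⟨hLν, hmemν, hdν, hgν⟩ := hfacts t ht.le ν hν
      set sν := ((t + u0) ^ 2 + 2 * (S:ℝ) * δ t ν) / (2 * t * S) with hsν
      set D := dist (w ν t) x with hD
      have hB2 : dist (w ν t) q ^ 2 = D ^ 2 + 2 * (c + t - δ t ν) * S + (S:ℝ) ^ 2 := by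
        rw [hq, hId (w ν t) (-(S:ℝ))]
        have hgwx : g (w ν t) - g x = c + t - δ t ν := by
          rw [hgν]
          simp only [hδ]
          rw [hc]
          ring
        rw [hgwx]
        ring
      have step1 : t ^ 2 + A ^ 2 - dist (w ν t) q ^ 2 ≤
          t ^ 2 + u0 ^ 2 - 2 * S * (t - δ t ν) := by
        rw [hB2, hA2]
        nlinarith only [sq_nonneg D]
      have hsν1 : sν ≤ 1 := le_trans hsνs hbig
      have step2 : t ^ 2 + u0 ^ 2 - 2 * S * (t - δ t ν) ≤ 2 * t * (u0 + S) * (sν - 1) := by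
        have hsνmul : sν * (2 * t * S) = (t + u0) ^ 2 + 2 * S * δ t ν := by
          rw [hsν]
          field_simp
        have hgoal : (t ^ 2 + u0 ^ 2 - 2 * S * (t - δ t ν)) * S
            ≤ (2 * t * (u0 + S) * (sν - 1)) * S := by
          have h7 : (u0 + (S:ℝ)) * (sν * (2 * t * S)) =
              (u0 + S) * ((t + u0) ^ 2 + 2 * S * δ t ν) := by rw [hsνmul]
          nlinarith only [h7, mul_nonneg hu0n (sq_nonneg (t + u0)),
            mul_nonneg (mul_nonneg hSpos.le hu0n) hδν0]
        exact le_of_mul_le_mul_right hgoal hSpos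
      have step3 : 2 * t * (u0 + S) * (sν - 1) ≤ 2 * t * A * (-1 + s) := by
        have h1 : sν - 1 ≤ 0 := by linarith only [hsν1]
        have h2 : (u0 + (S:ℝ)) * (sν - 1) ≤ A * (sν - 1) :=
          mul_le_mul_of_nonpos_right hAub h1
        have h3 : A * (sν - 1) ≤ A * (s - 1) :=
          mul_le_mul_of_nonneg_left (by linarith only [hsνs]) (by linarith only [hApos])
        calc 2 * t * (u0 + S) * (sν - 1) = 2 * t * ((u0 + S) * (sν - 1)) := by ring
        _ ≤ 2 * t * (A * (sν - 1)) :=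
            mul_le_mul_of_nonneg_left h2 (by linarith only [ht])
        _ ≤ 2 * t * (A * (s - 1)) :=
            mul_le_mul_of_nonneg_left h3 (by linarith only [ht])
        _ = 2 * t * A * (-1 + s) := by ring
      linarith only [step1, step2, step3]
    have hc1 := hclear n hn hδn0 (le_max_of_le_left hsn0) (by rw [hs]; linarith [hsm0])
    have hc2' := hclear m hm hδm0 (le_max_of_le_left hsn0) (by rw [hs]; linarith [hsn0])
    have := quad_close hcurv z (w n t) (w m t) q t s ht hdn hdm (by linarith [hApos]) hc1 hc2'
    linarith
  -- Cauchy sequences and limits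
  have hCau : ∀ t : ℝ, 0 ≤ t → CauchySeq (fun n => w n t) := by
    intro t ht
    rcases eq_or_lt_of_le ht with h0 | hpos
    · have : ∀ n, w n t = z := by
        intro n
        simp only [hw]
        rw [← h0, zero_div, (hσ n).2.1]
      apply cauchySeq_of_le_tendsto_0 (fun _ => 0)
      · intro n m N _ _
        rw [this n, this m, dist_self]
      · exact tendsto_const_nhds
    · rw [Metric.cauchySeq_iff']
      intro ε hε
      -- choose N and the auxiliary S
      obtain ⟨N, hN⟩ := exists_nat_gt (|c| + t + u0 + 1 + (1 + 8 * t * u0 / ε))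
      refine ⟨N, fun n hn => ?_⟩
      have h00 : (0:ℝ) ≤ 8 * t * u0 / ε := by positivity
      have hNlb : c + t + u0 + 1 ≤ (N:ℝ) := by
        have := le_abs_self c
        linarith
      have hnlb : c + t + u0 + 1 ≤ (n:ℝ) := by
        have : (N:ℝ) ≤ n := Nat.cast_le.2 hn
        linarith
      obtain ⟨S, hS⟩ := exists_nat_gt (|c| + 1 + 32 * t * (t + u0) ^ 2 / ε ^ 2)
      have hSlb : |c| + 1 ≤ (S:ℝ) := by
        have h1 : 0 ≤ 32 * t * (t + u0) ^ 2 / ε ^ 2 := by positivity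
        linarith
      have hkey := key t hpos n N S hnlb hNlb hSlb
      -- bound the two error terms
      have hβN : 1 + 8 * t * u0 / ε ≤ (N:ℝ) - c := by
        have := le_abs_self c
        linarith
      have hβn : 1 + 8 * t * u0 / ε ≤ (n:ℝ) - c := by
        have : (N:ℝ) ≤ n := Nat.cast_le.2 hn
        linarith
      have hδbound : ∀ ν : ℕ, c + t + u0 + 1 ≤ (ν:ℝ) → 1 + 8 * t * u0 / ε ≤ (ν:ℝ) - c →
          δ t ν ≤ ε ^ 2 / (64 * t) := by
        intro ν hν hβν
        have h1 := (hδfacts t hpos.le ν hν).2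
        have hβpos : 0 < (ν:ℝ) - c := by linarith
        have h2 : t * u0 ^ 2 / ((ν:ℝ) - c) ^ 2 ≤ ε ^ 2 / (64 * t) := by
          rw [div_le_div_iff₀ (pow_pos hβpos 2) (by linarith only [hpos] : (0:ℝ) < 64 * t)]
          have h4 : 0 ≤ 8 * t * u0 / ε := by positivity
          have h3 : (8 * t * u0 / ε) ^ 2 ≤ ((ν:ℝ) - c) ^ 2 :=
            pow_le_pow_left₀ h4 (by linarith only [hβν]) 2
          have h5 : (8 * t * u0 / ε) ^ 2 = 64 * t ^ 2 * u0 ^ 2 / ε ^ 2 := by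
            field_simp; ring
          rw [h5] at h3
          rw [div_le_iff₀ (by positivity : (0:ℝ) < ε ^ 2)] at h3
          nlinarith only [h3]
        linarith only [h1, h2]
      have hδn := hδbound n hnlb hβn
      have hδN := hδbound N hNlb hβN
      have hStail : 8 * t * (t + u0) ^ 2 / (S:ℝ) ≤ ε ^ 2 / 4 := by
        have h1 : 32 * t * (t + u0) ^ 2 / ε ^ 2 < (S:ℝ) := by
          linarith only [hS, abs_nonneg c]
        have hSpos' : (0:ℝ) < S := by linarith only [hSlb, abs_nonneg c]
        rw [div_le_div_iff₀ hSpos' (by norm_num : (0:ℝ) < 4)]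
        rw [div_lt_iff₀ (by positivity : (0:ℝ) < ε ^ 2)] at h1
        nlinarith only [h1]
      have hfinal : dist (w n t) (w N t) ^ 2 < ε ^ 2 := by
        have h8 : 8 * t * (δ t n + δ t N) ≤ 8 * t * (ε ^ 2 / (64 * t) + ε ^ 2 / (64 * t)) :=
          mul_le_mul_of_nonneg_left (by linarith only [hδn, hδN]) (by linarith only [hpos])
        have h9 : 8 * t * (ε ^ 2 / (64 * t) + ε ^ 2 / (64 * t)) = ε ^ 2 / 4 := by
          have ht' : t ≠ 0 := ne_of_gt hpos
          field_simp
          ring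
        nlinarith only [hkey, hStail, h8, h9, pow_pos hε 2]
      exact lt_of_pow_lt_pow_left₀ 2 hε.le hfinal
  have hlim : ∀ t : ℝ, 0 ≤ t → ∃ p : X, Filter.Tendsto (fun n => w n t) Filter.atTop (nhds p) :=
    fun t ht => cauchySeq_tendsto_of_complete (hCau t ht)
  set ρ : ℝ → X := fun t => if ht : 0 ≤ t then Classical.choose (hlim t ht) else z with hρ
  have htend : ∀ t : ℝ, (ht : 0 ≤ t) → Filter.Tendsto (fun n => w n t) Filter.atTop (nhds (ρ t)) := by
    intro t ht
    have e : ρ t = Classical.choose (hlim t ht) := by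
      simp only [hρ]
      exact dif_pos ht
    rw [e]
    exact Classical.choose_spec (hlim t ht)
  refine ⟨ρ, ?_, ?_, ?_⟩
  · -- ρ 0 = z
    have h1 : Filter.Tendsto (fun n : ℕ => w n 0) Filter.atTop (nhds z) := by
      have : ∀ n : ℕ, w n 0 = z := by
        intro n; simp only [hw]; rw [zero_div, (hσ n).2.1]
      simp only [this]
      exact tendsto_const_nhds
    exact tendsto_nhds_unique (htend 0 le_rfl) h1
  · -- distances
    intro s hs t ht
    have h1 : Filter.Tendsto (fun n => dist (w n s) (w n t)) Filter.atTop
        (nhds (dist (ρ s) (ρ t))) := (htend s hs).dist (htend t ht)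
    have h2 : Filter.Tendsto (fun n => dist (w n s) (w n t)) Filter.atTop (nhds |s - t|) := by
      apply Filter.Tendsto.congr' _ tendsto_const_nhds
      rw [Filter.eventuallyEq_iff_exists_mem]
      obtain ⟨N, hN⟩ := exists_nat_gt (c + s + u0 + 1 + (c + t + u0 + 1))
      refine ⟨Set.Ici N, Filter.mem_atTop N, fun n hn => ?_⟩
      have hcast : (N:ℝ) ≤ n := Nat.cast_le.2 hn
      have hpos1 : (0:ℝ) ≤ c + t + u0 + 1 := by
        have := neg_abs_le c; linarith
      have hpos2 : (0:ℝ) ≤ c + s + u0 + 1 := by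
        have := neg_abs_le c; linarith
      have hns : c + s + u0 + 1 ≤ (n:ℝ) := by linarith
      have hnt : c + t + u0 + 1 ≤ (n:ℝ) := by linarith
      obtain ⟨hLpos, hmems, _, _⟩ := hfacts s hs n hns
      obtain ⟨_, hmemt, _, _⟩ := hfacts t ht n hnt
      have hseg := (hσ n).1 (s / L n) hmems (t / L n) hmemt
      rw [(hσ n).2.1, (hσ n).2.2] at hseg
      simp only [hw]
      rw [hseg, show dist z (γ (n:ℕ)) = L n from rfl,
        show s / L n - t / L n = (s - t) / L n by ring, abs_div, abs_of_pos hLpos]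
      field_simp
    exact tendsto_nhds_unique h1 h2
  · -- slope of g
    intro t ht
    have hεbound : ∀ ε : ℝ, 0 < ε → |g (ρ t) - (g z + t)| ≤ ε := by
      intro ε hε
      obtain ⟨N, hN⟩ := (Metric.tendsto_atTop.1 (htend t ht)) (ε / 2) (by linarith)
      obtain ⟨M, hM⟩ := exists_nat_gt (max (c + t + u0 + 1) (c + 1 + 2 * t * u0 ^ 2 / ε))
      set n := max N M with hn
      have hNn : N ≤ n := le_max_left _ _
      have hMn : (M:ℝ) ≤ (n:ℝ) := Nat.cast_le.2 (le_max_right _ _)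
      have hth : c + t + u0 + 1 ≤ (n:ℝ) :=
        le_trans (le_trans (le_max_left _ _) hM.le) hMn
      obtain ⟨hLpos, _, _, hgw⟩ := hfacts t ht n hth
      obtain ⟨hδ0, hδub⟩ := hδfacts t ht n hth
      have hδsmall : δ t n ≤ ε / 2 := by
        have hR : c + 1 + 2 * t * u0 ^ 2 / ε ≤ (n:ℝ) :=
          le_trans (le_trans (le_max_right _ _) hM.le) hMn
        have hdiv0 : (0:ℝ) ≤ 2 * t * u0 ^ 2 / ε := by positivity
        have hβ : 1 + 2 * t * u0 ^ 2 / ε ≤ (n:ℝ) - c := by linarith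
        have h2 : (1:ℝ) ≤ (n:ℝ) - c := by linarith
        have h1 : t * u0 ^ 2 / ((n:ℝ) - c) ^ 2 ≤ ε / 2 := by
          rw [div_le_div_iff₀ (by positivity) (by norm_num : (0:ℝ) < 2)]
          have h3 : ((n:ℝ) - c) ≤ ((n:ℝ) - c) ^ 2 := by nlinarith
          have h5 : ε * (1 + 2 * t * u0 ^ 2 / ε) = ε + 2 * t * u0 ^ 2 := by
            field_simp
          nlinarith [mul_le_mul_of_nonneg_left hβ hε.le]
        linarith
      have hdist := hN n hNn
      rw [dist_comm] at hdist
      have h6 : |g (ρ t) - g (w n t)| ≤ dist (ρ t) (w n t) := by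
        have := hg (ρ t) (w n t)
        exact this
      have h7 : g (w n t) = g z + t - δ t n := by
        rw [hgw]; simp only [hδ]; ring
      have h8 : |g (w n t) - (g z + t)| = δ t n := by
        rw [h7, show g z + t - δ t n - (g z + t) = -(δ t n) by ring, abs_neg,
          abs_of_nonneg hδ0]
      calc |g (ρ t) - (g z + t)|
          ≤ |g (ρ t) - g (w n t)| + |g (w n t) - (g z + t)| := abs_sub_le _ _ _
      _ ≤ dist (ρ t) (w n t) + δ t n := by rw [h8]; linarith
      _ ≤ ε := by linarith
    have : |g (ρ t) - (g z + t)| = 0 := by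
      by_contra h
      have h1 : 0 < |g (ρ t) - (g z + t)| := lt_of_le_of_ne (abs_nonneg _) (Ne.symm h)
      have := hεbound (|g (ρ t) - (g z + t)| / 2) (by linarith)
      linarith
    have := abs_eq_zero.1 this
    linarith

lemma eu_dist_sq {k : ℕ} (a b : EuclideanSpace ℝ (Fin k)) :
    dist a b ^ 2 = ∑ j, (a j - b j) ^ 2 := by
  rw [EuclideanSpace.dist_eq, Real.sq_sqrt (by positivity)]
  congr 1
  ext j
  rw [Real.dist_eq, sq_abs]

/-- A full line through any point, with slope 1 for `g`. -/
lemma line_through (hcurv : CurvGE 0 X) (hgeo : GeodesicSpace X) [CompleteSpace X]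
    (g : X → ℝ) (hg : ∀ a b : X, |g a - g b| ≤ dist a b)
    (haffg : ∀ σ : ℝ → X, IsGeodesicSeg σ → ∀ u ∈ Set.Icc (0:ℝ) 1,
      g (σ u) = (1 - u) * g (σ 0) + u * g (σ 1))
    (γ : ℝ → X) (hiso : ∀ s t : ℝ, dist (γ s) (γ t) = |s - t|)
    (hsl : ∀ s : ℝ, g (γ s) = g (γ 0) + s) (z : X) :
    ∃ lam : ℝ → X, lam 0 = z ∧ (∀ s t : ℝ, dist (lam s) (lam t) = |s - t|) ∧
      (∀ t : ℝ, g (lam t) = g z + t) := by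
  obtain ⟨ρp, hρp0, hρpd, hρpg⟩ := ray hcurv hgeo g hg haffg γ hiso hsl z
  have hg' : ∀ a b : X, |(fun p => -g p) a - (fun p => -g p) b| ≤ dist a b := by
    intro a b
    simp only []
    rw [show -g a - -g b = -(g a - g b) by ring, abs_neg]
    exact hg a b
  have haffg' : ∀ σ : ℝ → X, IsGeodesicSeg σ → ∀ u ∈ Set.Icc (0:ℝ) 1,
      (fun p => -g p) (σ u) = (1 - u) * (fun p => -g p) (σ 0) + u * (fun p => -g p) (σ 1) := by
    intro σ hσ u hu
    simp only []
    rw [haffg σ hσ u hu]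
    ring
  have hiso' : ∀ s t : ℝ, dist (γ (-s)) (γ (-t)) = |s - t| := by
    intro s t
    rw [hiso, show -s - -t = -(s - t) by ring, abs_neg]
  have hsl' : ∀ s : ℝ, (fun p => -g p) (γ (-s)) = (fun p => -g p) (γ (-0)) + s := by
    intro s
    simp only [neg_zero]
    rw [hsl (-s)]
    ring
  obtain ⟨ρm, hρm0, hρmd, hρmg⟩ := ray hcurv hgeo (fun p => -g p) hg' haffg'
    (fun s => γ (-s)) hiso' hsl' z
  refine ⟨fun t => if 0 ≤ t then ρp t else ρm (-t), by simp [hρp0], ?_, ?_⟩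
  · intro s t
    have key : ∀ a b : ℝ, 0 ≤ a → b < 0 → dist (ρp a) (ρm (-b)) = |a - b| := by
      intro a b ha hb
      have hb' : (0:ℝ) ≤ -b := by linarith
      have h1 : dist (ρp a) (ρm (-b)) ≤ a - b := by
        have d1 : dist (ρp a) z = a := by
          rw [← hρp0, hρpd a ha 0 le_rfl, sub_zero, abs_of_nonneg ha]
        have d2 : dist z (ρm (-b)) = -b := by
          rw [← hρm0, hρmd 0 le_rfl (-b) hb', zero_sub, abs_neg, abs_of_nonneg hb']
        calc dist (ρp a) (ρm (-b)) ≤ dist (ρp a) z + dist z (ρm (-b)) := dist_triangle _ _ _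
        _ = a - b := by rw [d1, d2]; ring
      have h2 : a - b ≤ dist (ρp a) (ρm (-b)) := by
        have hga : g (ρp a) = g z + a := hρpg a ha
        have hgb : g (ρm (-b)) = g z + b := by
          have := hρmg (-b) hb'
          linarith
        calc a - b = |g (ρp a) - g (ρm (-b))| := by
              rw [hga, hgb, show g z + a - (g z + b) = a - b by ring,
                abs_of_nonneg (by linarith)]
        _ ≤ dist (ρp a) (ρm (-b)) := hg _ _
      rw [abs_of_nonneg (by linarith : (0:ℝ) ≤ a - b)]
      linarith
    by_cases hs : 0 ≤ s <;> by_cases hts : 0 ≤ t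
    · simp only [if_pos hs, if_pos hts]
      exact hρpd s hs t hts
    · push_neg at hts
      simp only [if_pos hs, if_neg (not_le.2 hts)]
      exact key s t hs hts
    · push_neg at hs
      simp only [if_neg (not_le.2 hs), if_pos hts]
      rw [dist_comm, abs_sub_comm]
      exact key t s hts hs
    · push_neg at hs hts
      simp only [if_neg (not_le.2 hs), if_neg (not_le.2 hts)]
      rw [hρmd (-s) (by linarith) (-t) (by linarith),
        show -s - -t = -(s - t) by ring, abs_neg]
  · intro t
    by_cases hts : 0 ≤ t
    · simp only [if_pos hts]
      exact hρpg t hts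
    · push_neg at hts
      simp only [if_neg (not_le.2 hts)]
      have := hρmg (-t) (by linarith)
      linarith

/-- The flow package: for each coordinate a flow by slope-1 lines. -/
lemma flows (hcurv : CurvGE 0 X) (hgeo : GeodesicSpace X) [CompleteSpace X] {k : ℕ}
    (F : X → EuclideanSpace ℝ (Fin k)) (hlip : LipschitzWith 1 F) (haff : AffineOn F)
    (x : X) (γ : Fin k → ℝ → X) (hγ : ∀ i, Isometry (γ i)) (hγ0 : ∀ i, γ i 0 = x)
    (hslope : ∀ (i : Fin k) (t : ℝ), F (γ i t) i = F x i + t) :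
    ∃ Θ : Fin k → X → ℝ → X,
      (∀ i z, Θ i z 0 = z) ∧
      (∀ i z t, F (Θ i z t) i = F z i + t) ∧
      (∀ i z t j, j ≠ i → F (Θ i z t) j = F z j) ∧
      (∀ i z w t, dist z (Θ i w t) ^ 2 = dist z w ^ 2 - 2 * (F z i - F w i) * t + t ^ 2) ∧
      (∀ i z t, Θ i (Θ i z t) (-t) = z) := by
  classical
  have hgco : ∀ (i : Fin k) (a b : X), |F a i - F b i| ≤ dist a b := by
    intro i a b
    have h1 : dist (F a) (F b) ≤ dist a b := by
      have := hlip.dist_le_mul a b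
      rw [NNReal.coe_one, one_mul] at this
      exact this
    have h3 : (F a i - F b i) ^ 2 ≤ dist (F a) (F b) ^ 2 := by
      rw [eu_dist_sq]
      exact Finset.single_le_sum (fun j _ => sq_nonneg (F a j - F b j)) (Finset.mem_univ i)
    have h4 : |F a i - F b i| ^ 2 ≤ dist (F a) (F b) ^ 2 := by rw [sq_abs]; exact h3
    have h5 : |F a i - F b i| ≤ dist (F a) (F b) :=
      le_of_pow_le_pow_left₀ two_ne_zero dist_nonneg h4
    exact le_trans h5 h1
  have hgaff : ∀ (i : Fin k) (σ : ℝ → X), IsGeodesicSeg σ → ∀ u ∈ Set.Icc (0:ℝ) 1,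
      F (σ u) i = (1 - u) * F (σ 0) i + u * F (σ 1) i := by
    intro i σ hσ u hu
    rw [haff σ hσ u hu]
    simp [PiLp.add_apply, PiLp.smul_apply, smul_eq_mul]
  have hlines : ∀ (z : X) (i : Fin k), ∃ lam : ℝ → X, lam 0 = z ∧
      (∀ s t : ℝ, dist (lam s) (lam t) = |s - t|) ∧ ∀ t : ℝ, F (lam t) i = F z i + t := by
    intro z i
    have hiso : ∀ s t : ℝ, dist (γ i s) (γ i t) = |s - t| := by
      intro s t; rw [(hγ i).dist_eq, Real.dist_eq]
    have hsl : ∀ s : ℝ, (fun p => F p i) (γ i s) = (fun p => F p i) (γ i 0) + s := by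
      intro s; simp only []; rw [hslope i s, hγ0 i]
    exact line_through hcurv hgeo (fun p => F p i) (hgco i)
      (fun σ hσ u hu => hgaff i σ hσ u hu) (γ i) hiso hsl z
  choose lam hlam0 hlamd hlamg using hlines
  set Θ : Fin k → X → ℝ → X := fun i z t => lam z i t with hΘ
  have hΘ0 : ∀ i z, Θ i z 0 = z := fun i z => hlam0 z i
  have hΘi : ∀ i z t, F (Θ i z t) i = F z i + t := fun i z t => hlamg z i t
  have hflowID : ∀ (i : Fin k) (z w : X) (t : ℝ),
      dist z (Θ i w t) ^ 2 = dist z w ^ 2 - 2 * (F z i - F w i) * t + t ^ 2 := by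
    intro i z w t
    have hsl2 : ∀ s : ℝ, (fun p => F p i) (lam w i s) = (fun p => F p i) (lam w i 0) + s := by
      intro s
      simp only []
      rw [hlam0 w i]
      exact hlamg w i s
    have := identityI hcurv (fun p => F p i) (hgco i) (lam w i) (hlamd w i) hsl2 z t
    rw [hlam0 w i] at this
    exact this
  have hΘj : ∀ (i : Fin k) (z : X) (t : ℝ) (j : Fin k), j ≠ i → F (Θ i z t) j = F z j := by
    intro i z t j hji
    set a := Θ i z t with ha
    have hdaz : dist a z = |t| := by
      rw [ha, show z = Θ i z 0 by rw [hΘ0]]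
      rw [show Θ i (Θ i z 0) t = Θ i z t by rw [hΘ0]]
      rw [show dist (Θ i z t) (Θ i z 0) = |t - 0| from hlamd z i t 0, sub_zero]
    have h5 : dist (F a) (F z) ≤ |t| := by
      have := hlip.dist_le_mul a z
      rw [NNReal.coe_one, one_mul, hdaz] at this
      exact this
    have h6 : ∑ l, (F a l - F z l) ^ 2 ≤ t ^ 2 := by
      rw [← eu_dist_sq]
      calc dist (F a) (F z) ^ 2 ≤ |t| ^ 2 := pow_le_pow_left₀ dist_nonneg h5 2
      _ = t ^ 2 := sq_abs t
    have h7 : (F a i - F z i) ^ 2 = t ^ 2 := by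
      rw [ha, hΘi]
      ring_nf
    have h8 : (F a i - F z i) ^ 2 + (F a j - F z j) ^ 2 ≤ ∑ l, (F a l - F z l) ^ 2 := by
      have hsub : ({i, j} : Finset (Fin k)).sum (fun l => (F a l - F z l) ^ 2)
          ≤ ∑ l, (F a l - F z l) ^ 2 :=
        Finset.sum_le_sum_of_subset_of_nonneg (Finset.subset_univ _)
          (fun l _ _ => sq_nonneg _)
      rwa [Finset.sum_pair (Ne.symm hji)] at hsub
    have h9 : (F a j - F z j) ^ 2 ≤ 0 := by linarith
    have h10 : F a j - F z j = 0 := by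
      have := le_antisymm h9 (sq_nonneg _)
      exact pow_eq_zero_iff two_ne_zero |>.1 this
    linarith [h10]
  have hcancel : ∀ (i : Fin k) (z : X) (t : ℝ), Θ i (Θ i z t) (-t) = z := by
    intro i z t
    have h1 := hflowID i z (Θ i z t) (-t)
    have h2 : dist z (Θ i z t) ^ 2 = t ^ 2 := by
      rw [show z = Θ i z 0 by rw [hΘ0]]
      rw [show Θ i (Θ i z 0) t = Θ i z t by rw [hΘ0]]
      rw [show dist (Θ i z 0) (Θ i z t) = |0 - t| from hlamd z i 0 t]
      rw [zero_sub, abs_neg, sq_abs]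
    have h3 : F (Θ i z t) i = F z i + t := hΘi i z t
    rw [h2, h3] at h1
    have h4 : dist z (Θ i (Θ i z t) (-t)) ^ 2 = 0 := by rw [h1]; ring
    have h5 : dist z (Θ i (Θ i z t) (-t)) = 0 := pow_eq_zero_iff two_ne_zero |>.1 h4
    exact (dist_eq_zero.1 h5).symm
  exact ⟨Θ, hΘ0, hΘi, hΘj, hflowID, hcancel⟩

/-- Iterated matching flow: flow coordinates `0, 1, ..., j-1` (in this order) by
prescribed amounts depending on the original point. -/
def iterQ {X : Type*} {k : ℕ} (Θ : Fin k → X → ℝ → X) (amt : X → Fin k → ℝ) :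
    ℕ → X → X
  | 0, y => y
  | j + 1, y =>
      if h : j < k then Θ ⟨j, h⟩ (iterQ Θ amt j y) (amt y ⟨j, h⟩) else iterQ Θ amt j y

/-- Iterated building flow: flow coordinates `k-1, k-2, ..., k-m` (in this order). -/
def iterV {X : Type*} {k : ℕ} (Θ : Fin k → X → ℝ → X) (amt : Fin k → ℝ) :
    ℕ → X → X
  | 0, y => y
  | m + 1, y =>
      if h : m < k then
        Θ ⟨k - 1 - m, by omega⟩ (iterV Θ amt m y) (amt ⟨k - 1 - m, by omega⟩)
      else iterV Θ amt m y

end MLSaux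

set_option maxHeartbeats 1000000 in
/-- Splitting off `k` lines: a `1`-Lipschitz affine map `F : X → ℝᵏ` whose
coordinates attain slope `1` along `k` lines through a common point makes `X` split as an
`ℓ²`-product `Z ×₂ ℝᵏ` with `F` the projection onto the `ℝᵏ`-factor. -/
theorem multi_line_splitting (n k : ℕ) (X : Type*) [MetricSpace X] (hX : IsAlexandrov n 0 X)
    (F : X → EuclideanSpace ℝ (Fin k)) (hlip : LipschitzWith 1 F) (haff : AffineOn F)
    (x : X) (γ : Fin k → ℝ → X) (hγ : ∀ i, Isometry (γ i)) (hγ0 : ∀ i, γ i 0 = x)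
    (hslope : ∀ (i : Fin k) (t : ℝ), F (γ i t) i = F x i + t) :
    ∃ (Z : Type) (_ : MetricSpace Z) (Φ : X → WithLp 2 (Z × EuclideanSpace ℝ (Fin k))),
      Isometry Φ ∧ Function.Surjective Φ ∧
      ∀ y : X, F y = ((WithLp.equiv 2 (Z × EuclideanSpace ℝ (Fin k))) (Φ y)).2 := by
  classical
  obtain ⟨hcomp, hprop, hgeo, _, hcurv⟩ := hX
  haveI := hcomp
  haveI := hprop
  obtain ⟨Θ, hΘ0, hΘi, hΘj, hID, hcan⟩ :=
    MLSaux.flows hcurv hgeo F hlip haff x γ hγ hγ0 hslope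
  set amtQ : X → Fin k → ℝ := fun y i => F x i - F y i with hamtQ
  -- coordinates after `j` steps of the matching flow
  have FQ : ∀ (y : X) (j : ℕ), j ≤ k → ∀ l : Fin k,
      F (MLSaux.iterQ Θ amtQ j y) l = if l.val < j then F x l else F y l := by
    intro y j
    induction j with
    | zero => intro _ l; simp [MLSaux.iterQ]
    | succ j ih =>
      intro hj l
      have hjk : j < k := hj
      simp only [MLSaux.iterQ, dif_pos hjk]
      set i : Fin k := ⟨j, hjk⟩ with hi
      have hival : i.val = j := rfl
      by_cases hl : l = i
      · rw [hl, hΘi, ih hjk.le i, if_neg (show ¬ i.val < j by omega),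
          if_pos (show i.val < j + 1 by omega)]
        simp only [hamtQ]
        ring
      · have hlj : l.val ≠ j := fun h => hl (Fin.ext h)
        rw [hΘj _ _ _ l hl, ih hjk.le l]
        by_cases h2 : l.val < j
        · rw [if_pos h2, if_pos (by omega)]
        · rw [if_neg h2, if_neg (by omega)]
  -- squared-distance contraction of the matching flow
  have dQ : ∀ (y z : X) (j : ℕ), j ≤ k →
      dist (MLSaux.iterQ Θ amtQ j y) (MLSaux.iterQ Θ amtQ j z) ^ 2 =
        dist y z ^ 2 - ∑ l : Fin k, (if l.val < j then (F y l - F z l) ^ 2 else 0) := by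
    intro y z j
    induction j with
    | zero => intro _; simp [MLSaux.iterQ]
    | succ j ih =>
      intro hj
      have hjk : j < k := hj
      set i : Fin k := ⟨j, hjk⟩ with hi
      have hival : i.val = j := rfl
      set a := MLSaux.iterQ Θ amtQ j y with hadef
      set b := MLSaux.iterQ Θ amtQ j z with hbdef
      have hFa : F a i = F y i := by rw [hadef, FQ y j hjk.le i, if_neg (by omega)]
      have hFb : F b i = F z i := by rw [hbdef, FQ z j hjk.le i, if_neg (by omega)]
      simp only [MLSaux.iterQ, dif_pos hjk]
      have h1 := hID i (Θ i a (amtQ y i)) b (amtQ z i)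
      have h2 := hID i b a (amtQ y i)
      rw [dist_comm b (Θ i a (amtQ y i))] at h2
      rw [dist_comm b a] at h2
      have h3 : F (Θ i a (amtQ y i)) i = F x i := by
        rw [hΘi, hFa]
        simp only [hamtQ]
        ring
      rw [h3, hFb] at h1
      rw [hFb, hFa] at h2
      have hsum : (∑ l : Fin k, (if l.val < j + 1 then (F y l - F z l) ^ 2 else 0)) =
          (∑ l : Fin k, (if l.val < j then (F y l - F z l) ^ 2 else 0))
            + (F y i - F z i) ^ 2 := by
        have hterm : ∀ l : Fin k, (if l.val < j + 1 then (F y l - F z l) ^ 2 else 0) =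
            (if l.val < j then (F y l - F z l) ^ 2 else 0)
              + (if l = i then (F y l - F z l) ^ 2 else 0) := by
          intro l
          by_cases h1' : l = i
          · subst h1'
            rw [if_pos (by omega), if_neg (by omega), if_pos rfl]
            ring
          · have : l.val ≠ j := fun h => h1' (Fin.ext h)
            by_cases h2' : l.val < j
            · rw [if_pos (by omega), if_pos h2', if_neg h1']; ring
            · rw [if_neg (by omega), if_neg h2', if_neg h1']; ring
        rw [Finset.sum_congr rfl (fun l _ => hterm l), Finset.sum_add_distrib,
          Finset.sum_ite_eq' Finset.univ i (fun l => (F y l - F z l) ^ 2),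
          if_pos (Finset.mem_univ i)]
      rw [hsum]
      have hih := ih hjk.le
      simp only [hamtQ] at h1 h2 ⊢
      linear_combination h1 + h2 + hih
  -- the projection to the fiber of x
  set P : X → X := fun y => MLSaux.iterQ Θ amtQ k y with hPdef
  have hPF : ∀ y : X, F (P y) = F x := by
    intro y
    ext l
    rw [hPdef]
    simp only []
    rw [FQ y k le_rfl l, if_pos l.isLt]
  have hPdist : ∀ y z : X, dist (P y) (P z) ^ 2 = dist y z ^ 2 - dist (F y) (F z) ^ 2 := by
    intro y z
    rw [hPdef]
    simp only []
    rw [dQ y z k le_rfl, MLSaux.eu_dist_sq]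
    congr 1
    apply Finset.sum_congr rfl
    intro l _
    rw [if_pos l.isLt]
  -- the fiber as a separable metric space, and its Kuratowski copy in Type 0
  set Y := {p : X // F p = F x} with hY
  haveI : TopologicalSpace.SeparableSpace Y :=
    TopologicalSpace.SecondCountableTopology.to_separableSpace
  set e : Y → lp (fun _ : ℕ => ℝ) ⊤ := kuratowskiEmbedding Y with he
  have hiso_e : Isometry e := kuratowskiEmbedding.isometry Y
  set Φ : X → WithLp 2 ((↥(Set.range e)) × EuclideanSpace ℝ (Fin k)) :=
    fun y => (WithLp.equiv 2 ((↥(Set.range e)) × EuclideanSpace ℝ (Fin k))).symm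
      (⟨e ⟨P y, hPF y⟩, Set.mem_range_self _⟩, F y) with hΦ
  have hΦ1 : ∀ y : X,
      ((WithLp.equiv 2 ((↥(Set.range e)) × EuclideanSpace ℝ (Fin k))) (Φ y)).1 =
        ⟨e ⟨P y, hPF y⟩, Set.mem_range_self _⟩ := by
    intro y
    rw [hΦ]
    simp only [Equiv.apply_symm_apply]
  have hΦ2 : ∀ y : X,
      ((WithLp.equiv 2 ((↥(Set.range e)) × EuclideanSpace ℝ (Fin k))) (Φ y)).2 = F y := by
    intro y
    rw [hΦ]
    simp only [Equiv.apply_symm_apply]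
  have hrp : ∀ r : ℝ, r ^ ((2:ENNReal).toReal) = r ^ 2 := by
    intro r
    rw [ENNReal.toReal_ofNat, show (2:ℝ) = ((2:ℕ):ℝ) by norm_num, Real.rpow_natCast]
  refine ⟨(↥(Set.range e)), inferInstance, Φ, ?_, ?_, fun y => (hΦ2 y).symm⟩
  · -- Isometry
    apply Isometry.of_dist_eq
    intro y z
    have hfst : dist (Φ y).fst (Φ z).fst = dist (P y) (P z) := by
      have h1 : (Φ y).fst = (⟨e ⟨P y, hPF y⟩, Set.mem_range_self _⟩ : (↥(Set.range e))) := rfl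
      have h2 : (Φ z).fst = (⟨e ⟨P z, hPF z⟩, Set.mem_range_self _⟩ : (↥(Set.range e))) := rfl
      rw [h1, h2, Subtype.dist_eq, hiso_e.dist_eq, Subtype.dist_eq]
    have hsnd : dist (Φ y).snd (Φ z).snd = dist (F y) (F z) := rfl
    rw [WithLp.prod_dist_eq_add (by norm_num : (0:ℝ) < (2:ENNReal).toReal), hfst, hsnd,
      hrp, hrp, ENNReal.toReal_ofNat]
    have hsq : dist (P y) (P z) ^ 2 + dist (F y) (F z) ^ 2 = dist y z ^ 2 := by
      linarith [hPdist y z]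
    rw [hsq, ← Real.sqrt_eq_rpow, Real.sqrt_sq dist_nonneg]
  · -- Surjectivity
    intro p
    obtain ⟨w, hw⟩ :=
      ((WithLp.equiv 2 ((↥(Set.range e)) × EuclideanSpace ℝ (Fin k))) p).1.2
    set v := ((WithLp.equiv 2 ((↥(Set.range e)) × EuclideanSpace ℝ (Fin k))) p).2 with hv
    set amtV : Fin k → ℝ := fun i => v i - F w.1 i with hamtV
    set y := MLSaux.iterV Θ amtV k w.1 with hy
    have FV : ∀ (m : ℕ), m ≤ k → ∀ l : Fin k,
        F (MLSaux.iterV Θ amtV m w.1) l = if k - m ≤ l.val then v l else F w.1 l := by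
      intro m
      induction m with
      | zero =>
        intro _ l
        have := l.isLt
        simp only [MLSaux.iterV]
        rw [if_neg (by omega)]
      | succ m ih =>
        intro hm l
        have hmk : m < k := hm
        simp only [MLSaux.iterV, dif_pos hmk]
        set i : Fin k := ⟨k - 1 - m, by omega⟩ with hi
        have hival : i.val = k - 1 - m := rfl
        have hlval := l.isLt
        by_cases hl : l = i
        · rw [hl, hΘi, ih hmk.le i, if_neg (show ¬ k - m ≤ i.val by omega),
            if_pos (show k - (m + 1) ≤ i.val by omega)]
          simp only [hamtV]
          ring
        · have hlne : l.val ≠ k - 1 - m := fun h => hl (Fin.ext h)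
          rw [hΘj _ _ _ l hl, ih hmk.le l]
          by_cases h2 : k - m ≤ l.val
          · rw [if_pos h2, if_pos (by omega)]
          · rw [if_neg h2, if_neg (by omega)]
    have hFy : F y = v := by
      ext l
      rw [hy]
      show F (MLSaux.iterV Θ amtV k w.1) l = v l
      rw [FV k le_rfl l, if_pos (by omega)]
    have QV : ∀ j : ℕ, j ≤ k →
        MLSaux.iterQ Θ amtQ j y = MLSaux.iterV Θ amtV (k - j) w.1 := by
      intro j
      induction j with
      | zero =>
        intro _
        show y = MLSaux.iterV Θ amtV (k - 0) w.1
        rw [Nat.sub_zero, hy]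
      | succ j ih =>
        intro hj
        have hjk : j < k := hj
        simp only [MLSaux.iterQ, dif_pos hjk]
        rw [ih hjk.le]
        have hkj : k - j = (k - j - 1) + 1 := by omega
        have hmk : k - j - 1 < k := by omega
        rw [hkj]
        simp only [MLSaux.iterV, dif_pos hmk]
        have hidx : (⟨k - 1 - (k - j - 1), by omega⟩ : Fin k) = ⟨j, hjk⟩ :=
          Fin.ext (by simp; omega)
        rw [hidx]
        have hamt : amtQ y ⟨j, hjk⟩ = -(amtV ⟨j, hjk⟩) := by
          simp only [hamtQ, hamtV]
          rw [hFy, w.2]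
          ring
        rw [hamt, hcan]
        rw [show k - (j + 1) = k - j - 1 from by omega]
    have hPy : P y = w.1 := by
      show MLSaux.iterQ Θ amtQ k y = w.1
      rw [QV k le_rfl, Nat.sub_self]
      rfl
    refine ⟨y, ?_⟩
    apply (WithLp.equiv 2 ((↥(Set.range e)) × EuclideanSpace ℝ (Fin k))).injective
    apply Prod.ext
    · rw [hΦ1 y]
      apply Subtype.ext
      show e ⟨P y, hPF y⟩ = _
      rw [show (⟨P y, hPF y⟩ : Y) = w from Subtype.ext hPy]
      exact hw
    · rw [hΦ2 y]
      exact hFy
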